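/- Skew-spectrum of the modified Cartesian product with bipartite factor: if the skew-eigenvalues of S(H^τ) are ±μ_1 i,…,±μ_t i together with m−2t zeros and those of S(G^σ) are ±λ_1 i,…,±λ_r i together with n−2r zeros, where H is bipartite, then the skew-eigenvalues of the oriented graph (H^τ □ G^σ)^o are ±i√(μ_j² + λ_k²) each with multiplicity 2 (1≤j≤t, 1≤k≤r), ±μ_j i with multiplicity n−2r, ±λ_k i with multiplicity m−2t, and 0 with multiplicity (m−2t)(n−2r). -/

import Mathlib

set_option linter.unusedSectionVars false
set_option maxHeartbeats 1000000

open Matrix Polynomial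
open scoped Kronecker

section Aux

variable {k l : Type*} [Fintype k] [DecidableEq k] [Fintype l] [DecidableEq l]

private lemma charpoly_conj_eq (U V N : Matrix k k ℂ) (h1 : U * V = 1) :
    (U * N * V).charpoly = N.charpoly := by
  let f : Matrix k k ℂ →+* Matrix k k ℂ[X] := (C : ℂ →+* ℂ[X]).mapMatrix
  have hcm : charmatrix (U * N * V) = f U * charmatrix N * f V := by
    have hscal : ∀ W : Matrix k k ℂ[X], Matrix.scalar k (X : ℂ[X]) * W
        = W * Matrix.scalar k (X : ℂ[X]) := by
      intro W
      rw [Matrix.scalar_commute (X : ℂ[X]) (Commute.all X) W]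
    rw [charmatrix, charmatrix]
    have hmul : (C : ℂ →+* ℂ[X]).mapMatrix (U * N * V) = f U * f N * f V := by
      simp only [f, _root_.map_mul]
    rw [hmul]
    rw [mul_sub, sub_mul]
    congr 1
    calc Matrix.scalar k (X : ℂ[X]) = Matrix.scalar k (X : ℂ[X]) * (f U * f V) := by
          rw [← _root_.map_mul, h1]; simp [f]
      _ = f U * Matrix.scalar k (X : ℂ[X]) * f V := by rw [← mul_assoc, hscal (f U)]
  rw [Matrix.charpoly, Matrix.charpoly, hcm, det_mul, det_mul]
  have hUV : (f U).det * (f V).det = 1 := by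
    rw [← det_mul, ← _root_.map_mul, h1]
    simp [f]
  rw [mul_right_comm, hUV, one_mul]

private lemma roots_charpoly_diagonal (d : k → ℂ) :
    (Matrix.diagonal d).charpoly.roots = Finset.univ.val.map d := by
  have hcm : charmatrix (Matrix.diagonal d) = Matrix.diagonal (fun i => (X : ℂ[X]) - C (d i)) := by
    ext i j
    by_cases h : i = j
    · subst h; simp [charmatrix_apply_eq]
    · simp [charmatrix_apply_ne _ _ _ h, Matrix.diagonal_apply_ne _ h]
  rw [Matrix.charpoly, hcm, det_diagonal]
  have : ∏ i, ((X : ℂ[X]) - C (d i))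
      = (Multiset.map (fun a => X - C a) (Finset.univ.val.map d)).prod := by
    rw [Multiset.map_map]
    rfl
  rw [this, Polynomial.roots_multiset_prod_X_sub_C]

private lemma roots_charpoly_of_unitary_diag (A U : Matrix k k ℂ) (d : k → ℂ)
    (h1 : U * star U = 1) (hA : A = U * Matrix.diagonal d * star U) :
    A.charpoly.roots = Finset.univ.val.map d := by
  rw [hA, charpoly_conj_eq _ _ _ h1, roots_charpoly_diagonal]

private lemma skew_decomp (A : Matrix k k ℂ) (hA : Aᴴ = -A) :
    ∃ (U : Matrix k k ℂ) (d : k → ℂ), U * star U = 1 ∧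
      A = U * Matrix.diagonal d * star U ∧ ∀ i, ∃ x : ℝ, d i = -Complex.I * x := by
  have hN : (Complex.I • A).IsHermitian := by
    unfold Matrix.IsHermitian
    rw [Matrix.conjTranspose_smul, hA]
    simp [Complex.conj_I, smul_smul]
  refine ⟨hN.eigenvectorUnitary, fun i => -Complex.I * (hN.eigenvalues i : ℂ), ?_, ?_, ?_⟩
  · exact Matrix.mem_unitaryGroup_iff.mp (hN.eigenvectorUnitary).2
  · have hspec := hN.spectral_theorem
    have hdiag : Matrix.diagonal (fun i => -Complex.I * (hN.eigenvalues i : ℂ))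
        = (-Complex.I) • Matrix.diagonal ((RCLike.ofReal ∘ hN.eigenvalues : k → ℂ)) := by
      rw [← Matrix.diagonal_smul]
      congr 1
    symm
    calc (hN.eigenvectorUnitary : Matrix k k ℂ)
          * Matrix.diagonal (fun i => -Complex.I * (hN.eigenvalues i : ℂ))
          * star (hN.eigenvectorUnitary : Matrix k k ℂ)
        = (-Complex.I) • ((hN.eigenvectorUnitary : Matrix k k ℂ)
            * Matrix.diagonal ((RCLike.ofReal ∘ hN.eigenvalues : k → ℂ))
            * star (hN.eigenvectorUnitary : Matrix k k ℂ)) := by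
          rw [hdiag, Matrix.mul_smul, Matrix.smul_mul]
      _ = (-Complex.I) • (Complex.I • A) := by rw [← Unitary.conjStarAlgAut_apply (S := ℂ), ← hspec]
      _ = A := by rw [smul_smul]; simp
  · intro i
    exact ⟨hN.eigenvalues i, rfl⟩

private lemma conj_diag_sq (U : Matrix k k ℂ) (d : k → ℂ) (h1 : U * star U = 1) :
    (U * Matrix.diagonal d * star U) * (U * Matrix.diagonal d * star U)
      = U * Matrix.diagonal (fun i => d i * d i) * star U := by
  have hsUU : star U * U = 1 := mul_eq_one_comm.mp h1
  have : Matrix.diagonal d * Matrix.diagonal d = Matrix.diagonal (fun i => d i * d i) := by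
    rw [Matrix.diagonal_mul_diagonal]
  calc (U * Matrix.diagonal d * star U) * (U * Matrix.diagonal d * star U)
      = U * (Matrix.diagonal d * ((star U * U) * (Matrix.diagonal d * star U))) := by
        simp only [Matrix.mul_assoc]
    _ = U * ((Matrix.diagonal d * Matrix.diagonal d) * star U) := by
        rw [hsUU, one_mul, Matrix.mul_assoc]
    _ = U * Matrix.diagonal (fun i => d i * d i) * star U := by
        rw [this, Matrix.mul_assoc]

private lemma kron_map_ofReal (X : Matrix k k ℝ) (Y : Matrix l l ℝ) :
    (X ⊗ₖ Y).map Complex.ofReal = (X.map Complex.ofReal) ⊗ₖ (Y.map Complex.ofReal) := by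
  ext ⟨i, j⟩ ⟨i', j'⟩
  simp [Matrix.kroneckerMap_apply, Matrix.map_apply]

private lemma kron_conjTranspose (X : Matrix k k ℂ) (Y : Matrix l l ℂ) :
    (X ⊗ₖ Y)ᴴ = Xᴴ ⊗ₖ Yᴴ := by
  ext ⟨i, j⟩ ⟨i', j'⟩
  simp [Matrix.kroneckerMap_apply, Matrix.conjTranspose_apply, _root_.map_mul]

private lemma neg_kron (X : Matrix k k ℂ) (Y : Matrix l l ℂ) :
    (-X) ⊗ₖ Y = -(X ⊗ₖ Y) := by
  ext ⟨i, j⟩ ⟨i', j'⟩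
  simp [Matrix.kroneckerMap_apply]

private lemma kron_neg (X : Matrix k k ℂ) (Y : Matrix l l ℂ) :
    X ⊗ₖ (-Y) = -(X ⊗ₖ Y) := by
  ext ⟨i, j⟩ ⟨i', j'⟩
  simp [Matrix.kroneckerMap_apply]



private lemma univ_prod_map {γ : Type*} (f : k × l → γ) :
    (Finset.univ : Finset (k × l)).val.map f
      = Finset.univ.val.bind (fun i => Finset.univ.val.map (fun j => f (i, j))) := by
  rw [← Finset.univ_product_univ, Finset.product_val]
  show (Finset.univ.val.bind fun a => Finset.univ.val.map (Prod.mk a)).map f = _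
  rw [Multiset.map_bind]
  simp [Multiset.map_map, Function.comp]

private lemma univ_prod_bind {γ : Type*} (g : k × l → Multiset γ) :
    (Finset.univ : Finset (k × l)).val.bind g
      = Finset.univ.val.bind (fun i => Finset.univ.val.bind (fun j => g (i, j))) := by
  rw [← Finset.univ_product_univ, Finset.product_val]
  show (Finset.univ.val.bind fun a => Finset.univ.val.map (Prod.mk a)).bind g = _
  rw [Multiset.bind_assoc]
  simp [Multiset.bind_map, Function.comp]

end Aux

private lemma bind_replicate' {α β : Type*} (c : ℕ) (a : α) (f : α → Multiset β) :
    (Multiset.replicate c a).bind f = c • f a := by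
  induction c with
  | zero => simp
  | succ nn ih => rw [Multiset.replicate_succ, Multiset.cons_bind, ih, succ_nsmul']

private lemma nsmul_bind' {α β : Type*} (c : ℕ) (s : Multiset α) (f : α → Multiset β) :
    c • (s.bind f) = s.bind (fun a => c • f a) := by
  induction c with
  | zero => simp
  | succ nn ih => simp only [succ_nsmul, ih, ← Multiset.bind_add]

private lemma univ_prod_bind' {k l γ : Type*} [Fintype k] [Fintype l] (g : k × l → Multiset γ) :
    (Finset.univ : Finset (k × l)).val.bind g
      = Finset.univ.val.bind (fun i => Finset.univ.val.bind (fun j => g (i, j))) := by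
  rw [← Finset.univ_product_univ, Finset.product_val]
  show (Finset.univ.val.bind fun a => Finset.univ.val.map (Prod.mk a)).bind g = _
  rw [Multiset.bind_assoc]
  simp [Multiset.bind_map, Function.comp]

private lemma replicate_two_nsmul {α : Type*} (a0 : ℕ) (c : α) :
    a0 • Multiset.replicate 2 c = Multiset.replicate a0 c + Multiset.replicate a0 c := by
  rw [Multiset.nsmul_replicate, mul_two, Multiset.replicate_add]

private lemma grind_lemma {tt rr : Type*} [Fintype tt] [Fintype rr] (a0 b0 : ℕ)
    (cH : tt → ℂ) (cG : rr → ℂ) :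
    (Multiset.replicate a0 (0:ℂ)
        + Finset.univ.val.bind (fun j => Multiset.replicate 2 (cH j))).bind
      (fun x => (Multiset.replicate b0 (0:ℂ)
        + Finset.univ.val.bind (fun k => Multiset.replicate 2 (cG k))).map (fun y => x + y))
    = Multiset.replicate (a0 * b0) (0:ℂ)
      + Finset.univ.val.bind (fun j => Finset.univ.val.bind (fun k =>
          Multiset.replicate 2 (cH j + cG k) + Multiset.replicate 2 (cH j + cG k)))
      + Finset.univ.val.bind (fun j =>
          Multiset.replicate b0 (cH j) + Multiset.replicate b0 (cH j))
      + Finset.univ.val.bind (fun k =>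
          Multiset.replicate a0 (cG k) + Multiset.replicate a0 (cG k)) := by
  rw [Multiset.add_bind]
  have hT1 : (Multiset.replicate a0 (0:ℂ)).bind
      (fun x => (Multiset.replicate b0 (0:ℂ)
        + Finset.univ.val.bind (fun k => Multiset.replicate 2 (cG k))).map (fun y => x + y))
      = Multiset.replicate (a0 * b0) 0
        + Finset.univ.val.bind (fun k =>
            Multiset.replicate a0 (cG k) + Multiset.replicate a0 (cG k)) := by
    rw [bind_replicate']
    simp only [zero_add, Multiset.map_id']
    rw [smul_add, Multiset.nsmul_replicate, nsmul_bind']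
    congr 1
    exact Multiset.bind_congr (fun k _ => replicate_two_nsmul a0 (cG k))
  have hT2 : (Finset.univ.val.bind (fun j => Multiset.replicate 2 (cH j))).bind
      (fun x => (Multiset.replicate b0 (0:ℂ)
        + Finset.univ.val.bind (fun k => Multiset.replicate 2 (cG k))).map (fun y => x + y))
      = Finset.univ.val.bind (fun j => Finset.univ.val.bind (fun k =>
            Multiset.replicate 2 (cH j + cG k) + Multiset.replicate 2 (cH j + cG k)))
        + Finset.univ.val.bind (fun j =>
            Multiset.replicate b0 (cH j) + Multiset.replicate b0 (cH j)) := by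
    rw [Multiset.bind_assoc]
    have step : ∀ j : tt, (Multiset.replicate 2 (cH j)).bind
        (fun x => (Multiset.replicate b0 (0:ℂ)
          + Finset.univ.val.bind (fun k => Multiset.replicate 2 (cG k))).map (fun y => x + y))
        = Finset.univ.val.bind (fun k =>
            Multiset.replicate 2 (cH j + cG k) + Multiset.replicate 2 (cH j + cG k))
          + (Multiset.replicate b0 (cH j) + Multiset.replicate b0 (cH j)) := by
      intro j
      rw [bind_replicate', two_nsmul]
      rw [Multiset.map_add, Multiset.map_replicate, Multiset.map_bind]
      simp only [add_zero, Multiset.map_replicate]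
      rw [Multiset.bind_add]
      abel
    rw [Multiset.bind_congr (fun j _ => step j), Multiset.bind_add]
  rw [hT1, hT2]
  abel

private lemma target_sq_struct {tt rr : Type*} [Fintype tt] [Fintype rr] (a0 b0 : ℕ)
    (sP : tt × rr → ℂ) (sH : tt → ℂ) (sG : rr → ℂ)
    (cP : tt → rr → ℂ) (cH : tt → ℂ) (cG : rr → ℂ)
    (hP : ∀ p : tt × rr, (sP p) ^ 2 = cP p.1 p.2) (hH : ∀ j, (sH j) ^ 2 = cH j)
    (hG : ∀ k, (sG k) ^ 2 = cG k) :
    (Multiset.replicate (a0 * b0) (0:ℂ)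
      + Finset.univ.val.bind (fun p : tt × rr =>
          Multiset.replicate 2 (sP p) + Multiset.replicate 2 (-(sP p)))
      + Finset.univ.val.bind (fun j =>
          Multiset.replicate b0 (sH j) + Multiset.replicate b0 (-(sH j)))
      + Finset.univ.val.bind (fun k =>
          Multiset.replicate a0 (sG k) + Multiset.replicate a0 (-(sG k)))).map (fun z => z ^ 2)
    = Multiset.replicate (a0 * b0) (0:ℂ)
      + Finset.univ.val.bind (fun j => Finset.univ.val.bind (fun k =>
          Multiset.replicate 2 (cP j k) + Multiset.replicate 2 (cP j k)))
      + Finset.univ.val.bind (fun j =>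
          Multiset.replicate b0 (cH j) + Multiset.replicate b0 (cH j))
      + Finset.univ.val.bind (fun k =>
          Multiset.replicate a0 (cG k) + Multiset.replicate a0 (cG k)) := by
  simp only [Multiset.map_add, Multiset.map_bind, Multiset.map_replicate, neg_sq]
  congr 1
  · congr 1
    · congr 1
      · norm_num
      · rw [univ_prod_bind']
        refine Multiset.bind_congr (fun j _ => Multiset.bind_congr (fun k _ => ?_))
        rw [hP (j, k)]
    · exact Multiset.bind_congr (fun j _ => by rw [hH j])
  · exact Multiset.bind_congr (fun k _ => by rw [hG k])

private lemma target_neg_struct {tt rr : Type*} [Fintype tt] [Fintype rr] (a0 b0 N0 : ℕ)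
    (sP : tt × rr → ℂ) (sH : tt → ℂ) (sG : rr → ℂ) :
    (Multiset.replicate N0 (0:ℂ)
      + Finset.univ.val.bind (fun p : tt × rr =>
          Multiset.replicate 2 (sP p) + Multiset.replicate 2 (-(sP p)))
      + Finset.univ.val.bind (fun j =>
          Multiset.replicate b0 (sH j) + Multiset.replicate b0 (-(sH j)))
      + Finset.univ.val.bind (fun k =>
          Multiset.replicate a0 (sG k) + Multiset.replicate a0 (-(sG k)))).map (fun z => -z)
    = Multiset.replicate N0 (0:ℂ)
      + Finset.univ.val.bind (fun p : tt × rr =>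
          Multiset.replicate 2 (sP p) + Multiset.replicate 2 (-(sP p)))
      + Finset.univ.val.bind (fun j =>
          Multiset.replicate b0 (sH j) + Multiset.replicate b0 (-(sH j)))
      + Finset.univ.val.bind (fun k =>
          Multiset.replicate a0 (sG k) + Multiset.replicate a0 (-(sG k))) := by
  simp only [Multiset.map_add, Multiset.map_bind, Multiset.map_replicate, neg_zero, neg_neg]
  congr 1
  · congr 1
    · congr 1
      · exact Multiset.bind_congr (fun p _ => add_comm _ _)
    · exact Multiset.bind_congr (fun j _ => add_comm _ _)
  · exact Multiset.bind_congr (fun k _ => add_comm _ _)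


private lemma sq_neg_unique_aux : ∀ (N : ℕ) (R T : Multiset ℂ), Multiset.card R ≤ N →
    R.map (fun z => -z) = R → T.map (fun z => -z) = T →
    R.map (fun z => z ^ 2) = T.map (fun z => z ^ 2) → R = T := by
  intro N
  induction N with
  | zero =>
    intro R T hcard _ _ hsq
    have hR : R = 0 := Multiset.card_eq_zero.mp (Nat.le_zero.mp hcard)
    subst hR
    simp only [Multiset.map_zero] at hsq
    exact (Multiset.map_eq_zero.mp hsq.symm).symm
  | succ N ih =>
    intro R T hcard hR hT hsq
    rcases Multiset.empty_or_exists_mem R with hRe | ⟨a, ha⟩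
    · subst hRe
      simp only [Multiset.map_zero] at hsq
      exact (Multiset.map_eq_zero.mp hsq.symm).symm
    · -- a ∈ T as well
      have haT : a ∈ T := by
        have h1 : a ^ 2 ∈ T.map (fun z => z ^ 2) := hsq ▸ Multiset.mem_map_of_mem _ ha
        obtain ⟨b, hbT, hb2⟩ := Multiset.mem_map.mp h1
        have : (b - a) * (b + a) = 0 := by ring_nf; linear_combination hb2
        rcases mul_eq_zero.mp this with h | h
        · rwa [sub_eq_zero.mp h] at hbT
        · have hab : a = -b := by linear_combination h
          rw [hab]
          have := Multiset.mem_map_of_mem (fun z : ℂ => -z) hbT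
          rwa [hT] at this
      by_cases ha0 : a = 0
      · subst ha0
        have hR' := Multiset.map_erase_of_mem (fun z : ℂ => -z) R ha
        have hT' := Multiset.map_erase_of_mem (fun z : ℂ => -z) T haT
        simp only [neg_zero] at hR' hT'
        rw [hR] at hR'
        rw [hT] at hT'
        have hsq' : (R.erase 0).map (fun z => z ^ 2) = (T.erase 0).map (fun z => z ^ 2) := by
          rw [Multiset.map_erase_of_mem _ R ha, Multiset.map_erase_of_mem _ T haT, hsq]
        have hcard' : Multiset.card (R.erase 0) ≤ N := by
          have h1 := Multiset.card_erase_of_mem ha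
          simp only [Nat.pred_eq_sub_one] at h1
          omega
        have := ih (R.erase 0) (T.erase 0) hcard' hR' hT' hsq'
        rw [← Multiset.cons_erase ha, ← Multiset.cons_erase haT, this]
      · -- a ≠ 0 : also -a ∈ R, -a ∈ T, and a ≠ -a
        have hane : a ≠ -a := fun h => ha0 (by
          have h2 : (2 : ℂ) * a = 0 := by linear_combination h
          rcases mul_eq_zero.mp h2 with h' | h'
          · exact absurd h' two_ne_zero
          · exact h')
        have hnaR : -a ∈ R := by
          have := Multiset.mem_map_of_mem (fun z : ℂ => -z) ha; rwa [hR] at this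
        have hnaT : -a ∈ T := by
          have := Multiset.mem_map_of_mem (fun z : ℂ => -z) haT; rwa [hT] at this
        have hnaR' : -a ∈ R.erase a := (Multiset.mem_erase_of_ne (Ne.symm hane)).mpr hnaR
        have hnaT' : -a ∈ T.erase a := (Multiset.mem_erase_of_ne (Ne.symm hane)).mpr hnaT
        set R' := (R.erase a).erase (-a) with hR'def
        set T' := (T.erase a).erase (-a) with hT'def
        have negR' : R'.map (fun z => -z) = R' := by
          rw [hR'def, Multiset.map_erase_of_mem _ _ hnaR',
            Multiset.map_erase_of_mem (fun z : ℂ => -z) R ha, hR, neg_neg,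
            Multiset.erase_comm]
        have negT' : T'.map (fun z => -z) = T' := by
          rw [hT'def, Multiset.map_erase_of_mem _ _ hnaT',
            Multiset.map_erase_of_mem (fun z : ℂ => -z) T haT, hT, neg_neg,
            Multiset.erase_comm]
        have sqR' : R'.map (fun z => z ^ 2) = ((R.map fun z => z ^ 2).erase (a ^ 2)).erase (a ^ 2) := by
          rw [hR'def, Multiset.map_erase_of_mem _ _ hnaR',
            Multiset.map_erase_of_mem (fun z : ℂ => z ^ 2) R ha, neg_pow, neg_one_sq, one_mul]
        have sqT' : T'.map (fun z => z ^ 2) = ((T.map fun z => z ^ 2).erase (a ^ 2)).erase (a ^ 2) := by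
          rw [hT'def, Multiset.map_erase_of_mem _ _ hnaT',
            Multiset.map_erase_of_mem (fun z : ℂ => z ^ 2) T haT, neg_pow, neg_one_sq, one_mul]
        have hsq' : R'.map (fun z => z ^ 2) = T'.map (fun z => z ^ 2) := by
          rw [sqR', sqT', hsq]
        have hcard' : Multiset.card R' ≤ N := by
          have h1 := Multiset.card_erase_of_mem ha
          have h2 := Multiset.card_erase_of_mem hnaR'
          have h3 := Multiset.card_pos_iff_exists_mem.mpr ⟨_, hnaR'⟩
          simp only [Nat.pred_eq_sub_one] at h1 h2
          rw [hR'def]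
          omega
        have hRT' := ih R' T' hcard' negR' negT' hsq'
        calc R = a ::ₘ R.erase a := (Multiset.cons_erase ha).symm
          _ = a ::ₘ -a ::ₘ R' := by rw [hR'def, Multiset.cons_erase hnaR']
          _ = a ::ₘ -a ::ₘ T' := by rw [hRT']
          _ = a ::ₘ T.erase a := by rw [hT'def, Multiset.cons_erase hnaT']
          _ = T := Multiset.cons_erase haT

theorem modifiedCartesianProduct_spectrum {m n t r : ℕ} (ht : 2 * t ≤ m) (hr : 2 * r ≤ n)
    (SH : Matrix (Fin m) (Fin m) ℝ) (SG : Matrix (Fin n) (Fin n) ℝ)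
    (D : Matrix (Fin m) (Fin m) ℝ)
    (hSH : SHᵀ = -SH) (hSG : SGᵀ = -SG)
    (hDdiag : ∀ i j, i ≠ j → D i j = 0)
    (hDpm : ∀ i, D i i = 1 ∨ D i i = -1)
    (hanti : D * SH = -(SH * D))
    (μ : Fin t → ℝ) (ν : Fin r → ℝ)
    (hμpos : ∀ j, 0 < μ j) (hνpos : ∀ k, 0 < ν k)
    (hHspec : (SH.map Complex.ofReal).charpoly.roots =
      Multiset.replicate (m - 2 * t) 0 +
        (Finset.univ : Finset (Fin t)).val.bind (fun j =>
          {(μ j : ℂ) * Complex.I, -((μ j : ℂ) * Complex.I)}))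
    (hGspec : (SG.map Complex.ofReal).charpoly.roots =
      Multiset.replicate (n - 2 * r) 0 +
        (Finset.univ : Finset (Fin r)).val.bind (fun k =>
          {(ν k : ℂ) * Complex.I, -((ν k : ℂ) * Complex.I)})) :
    ((SH ⊗ₖ (1 : Matrix (Fin n) (Fin n) ℝ) + D ⊗ₖ SG).map Complex.ofReal).charpoly.roots =
      Multiset.replicate ((m - 2 * t) * (n - 2 * r)) 0 +
        (Finset.univ : Finset (Fin t × Fin r)).val.bind (fun p =>
          Multiset.replicate 2
              ((Real.sqrt ((μ p.1) ^ 2 + (ν p.2) ^ 2) : ℂ) * Complex.I) +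
            Multiset.replicate 2
              (-((Real.sqrt ((μ p.1) ^ 2 + (ν p.2) ^ 2) : ℂ) * Complex.I))) +
        (Finset.univ : Finset (Fin t)).val.bind (fun j =>
          Multiset.replicate (n - 2 * r) ((μ j : ℂ) * Complex.I) +
            Multiset.replicate (n - 2 * r) (-((μ j : ℂ) * Complex.I))) +
        (Finset.univ : Finset (Fin r)).val.bind (fun k =>
          Multiset.replicate (m - 2 * t) ((ν k : ℂ) * Complex.I) +
            Multiset.replicate (m - 2 * t) (-((ν k : ℂ) * Complex.I))) := by
  classical
  set A : Matrix (Fin m) (Fin m) ℂ := SH.map Complex.ofReal with hAdef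
  set B : Matrix (Fin n) (Fin n) ℂ := SG.map Complex.ofReal with hBdef
  set Dc : Matrix (Fin m) (Fin m) ℂ := D.map Complex.ofReal with hDcdef
  set Mc : Matrix (Fin m × Fin n) (Fin m × Fin n) ℂ :=
    A ⊗ₖ (1 : Matrix (Fin n) (Fin n) ℂ) + Dc ⊗ₖ B with hMcdef
  -- the matrix in the statement is Mc
  have hMcmap : (SH ⊗ₖ (1 : Matrix (Fin n) (Fin n) ℝ) + D ⊗ₖ SG).map Complex.ofReal = Mc := by
    ext ⟨i, j⟩ ⟨i', j'⟩
    simp only [Matrix.map_apply, Matrix.add_apply, Matrix.kroneckerMap_apply, hMcdef,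
      Matrix.one_apply, hAdef, hBdef, hDcdef, mul_ite, mul_one, mul_zero, ite_mul, one_mul,
      zero_mul]
    split <;> push_cast <;> ring
  rw [hMcmap]
  -- skew-hermitian facts
  have hSH' : ∀ i j, SH j i = -SH i j := fun i j => by
    have := congrFun (congrFun hSH i) j
    simpa using this
  have hSG' : ∀ i j, SG j i = -SG i j := fun i j => by
    have := congrFun (congrFun hSG i) j
    simpa using this
  have hAH : Aᴴ = -A := by
    ext i j
    simp [hAdef, Matrix.conjTranspose_apply, Matrix.map_apply, hSH' i j]
  have hBH : Bᴴ = -B := by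
    ext i j
    simp [hBdef, Matrix.conjTranspose_apply, Matrix.map_apply, hSG' i j]
  have hDc_diag : Dc = Matrix.diagonal (fun i => (D i i : ℂ)) := by
    ext i j
    by_cases h : i = j
    · subst h; simp [hDcdef, Matrix.map_apply]
    · simp [hDcdef, Matrix.map_apply, hDdiag i j h, Matrix.diagonal_apply_ne _ h]
  have hDcH : Dcᴴ = Dc := by
    rw [hDc_diag, Matrix.diagonal_conjTranspose]
    refine congrArg Matrix.diagonal (funext fun i => ?_)
    simp [Pi.star_apply, Complex.star_def, Complex.conj_ofReal]
  have hDc2 : Dc * Dc = 1 := by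
    rw [hDc_diag, Matrix.diagonal_mul_diagonal, ← Matrix.diagonal_one]
    refine congrArg Matrix.diagonal (funext fun i => ?_)
    rcases hDpm i with h | h <;> rw [h] <;> norm_num
  have hanti' : Dc * A = -(A * Dc) := by
    ext i j
    have hij := congrFun (congrFun hanti i) j
    simp only [Matrix.mul_apply, Matrix.neg_apply] at hij
    simp only [hDcdef, hAdef, Matrix.mul_apply, Matrix.map_apply, Matrix.neg_apply]
    exact_mod_cast hij
  have hMcH : Mcᴴ = -Mc := by
    rw [hMcdef, Matrix.conjTranspose_add, kron_conjTranspose, kron_conjTranspose, hAH, hBH,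
      hDcH, Matrix.conjTranspose_one, neg_kron, kron_neg, neg_add]
  -- square of Mc
  have hM2 : Mc * Mc = (A * A) ⊗ₖ (1 : Matrix (Fin n) (Fin n) ℂ)
      + (1 : Matrix (Fin m) (Fin m) ℂ) ⊗ₖ (B * B) := by
    have e1 : (A ⊗ₖ (1 : Matrix (Fin n) (Fin n) ℂ)) * (A ⊗ₖ 1) = (A * A) ⊗ₖ 1 := by
      rw [← mul_kronecker_mul, one_mul]
    have e2 : (A ⊗ₖ (1 : Matrix (Fin n) (Fin n) ℂ)) * (Dc ⊗ₖ B) = (A * Dc) ⊗ₖ B := by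
      rw [← mul_kronecker_mul, one_mul]
    have e3 : (Dc ⊗ₖ B) * (A ⊗ₖ (1 : Matrix (Fin n) (Fin n) ℂ)) = (Dc * A) ⊗ₖ B := by
      rw [← mul_kronecker_mul, mul_one]
    have e4 : (Dc ⊗ₖ B) * (Dc ⊗ₖ B) = (1 : Matrix (Fin m) (Fin m) ℂ) ⊗ₖ (B * B) := by
      rw [← mul_kronecker_mul, hDc2]
    rw [hMcdef, add_mul, mul_add, mul_add, e1, e2, e3, e4, hanti', neg_kron]
    abel
    -- spectral decompositions
  obtain ⟨UA, dA, hUA, hAdec, _⟩ := skew_decomp A hAH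
  obtain ⟨UB, dB, hUB, hBdec, _⟩ := skew_decomp B hBH
  obtain ⟨UM, dM, hUM, hMdec, hdMim⟩ := skew_decomp Mc hMcH
  have rootsA : A.charpoly.roots = Finset.univ.val.map dA :=
    roots_charpoly_of_unitary_diag A UA dA hUA hAdec
  have rootsB : B.charpoly.roots = Finset.univ.val.map dB :=
    roots_charpoly_of_unitary_diag B UB dB hUB hBdec
  have rootsM : Mc.charpoly.roots = Finset.univ.val.map dM :=
    roots_charpoly_of_unitary_diag Mc UM dM hUM hMdec
  -- Kronecker of unitaries
  have hUAB : (UA ⊗ₖ UB) * star (UA ⊗ₖ UB) = 1 := by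
    rw [Matrix.star_eq_conjTranspose, kron_conjTranspose, ← mul_kronecker_mul,
      ← Matrix.star_eq_conjTranspose UA, ← Matrix.star_eq_conjTranspose UB, hUA, hUB,
      one_kronecker_one]
  -- two diagonalizations of Mc * Mc
  have hA2 : A * A = UA * Matrix.diagonal (fun i => dA i * dA i) * star UA := by
    rw [hAdec]; exact conj_diag_sq UA dA hUA
  have hB2 : B * B = UB * Matrix.diagonal (fun i => dB i * dB i) * star UB := by
    rw [hBdec]; exact conj_diag_sq UB dB hUB
  have hM2dec : Mc * Mc = (UA ⊗ₖ UB)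
      * Matrix.diagonal (fun p : Fin m × Fin n => dA p.1 * dA p.1 + dB p.2 * dB p.2)
      * star (UA ⊗ₖ UB) := by
    have l1 : (UA * Matrix.diagonal (fun i => dA i * dA i) * star UA)
        ⊗ₖ (1 : Matrix (Fin n) (Fin n) ℂ)
        = (UA ⊗ₖ UB) * ((Matrix.diagonal (fun i => dA i * dA i))
            ⊗ₖ (1 : Matrix (Fin n) (Fin n) ℂ)) * star (UA ⊗ₖ UB) := by
      rw [Matrix.star_eq_conjTranspose (UA ⊗ₖ UB), kron_conjTranspose, ← mul_kronecker_mul,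
        ← mul_kronecker_mul, mul_one, ← Matrix.star_eq_conjTranspose UB, hUB,
        ← Matrix.star_eq_conjTranspose UA]
    have l2 : (1 : Matrix (Fin m) (Fin m) ℂ)
        ⊗ₖ (UB * Matrix.diagonal (fun i => dB i * dB i) * star UB)
        = (UA ⊗ₖ UB) * ((1 : Matrix (Fin m) (Fin m) ℂ)
            ⊗ₖ (Matrix.diagonal (fun i => dB i * dB i))) * star (UA ⊗ₖ UB) := by
      rw [Matrix.star_eq_conjTranspose (UA ⊗ₖ UB), kron_conjTranspose, ← mul_kronecker_mul,
        ← mul_kronecker_mul, mul_one, ← Matrix.star_eq_conjTranspose UA, hUA,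
        ← Matrix.star_eq_conjTranspose UB]
    have l3 : (Matrix.diagonal (fun i => dA i * dA i)) ⊗ₖ (1 : Matrix (Fin n) (Fin n) ℂ)
        + (1 : Matrix (Fin m) (Fin m) ℂ) ⊗ₖ (Matrix.diagonal (fun i => dB i * dB i))
        = Matrix.diagonal (fun p : Fin m × Fin n => dA p.1 * dA p.1 + dB p.2 * dB p.2) := by
      rw [show (1 : Matrix (Fin n) (Fin n) ℂ) = Matrix.diagonal (fun _ => 1) from
          Matrix.diagonal_one.symm,
        show (1 : Matrix (Fin m) (Fin m) ℂ) = Matrix.diagonal (fun _ => 1) from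
          Matrix.diagonal_one.symm,
        diagonal_kronecker_diagonal, diagonal_kronecker_diagonal, Matrix.diagonal_add]
      refine congrArg Matrix.diagonal (funext fun p => ?_)
      simp
    rw [hM2, hA2, hB2, l1, l2, ← add_mul, ← mul_add, l3]
  have hM2dec' : Mc * Mc = UM * Matrix.diagonal (fun p => dM p * dM p) * star UM := by
    rw [hMdec]; exact conj_diag_sq UM dM hUM
  have w1 : (Mc * Mc).charpoly.roots
      = Finset.univ.val.map (fun p : Fin m × Fin n => dA p.1 * dA p.1 + dB p.2 * dB p.2) :=
    roots_charpoly_of_unitary_diag _ _ _ hUAB hM2dec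
  have w2 : (Mc * Mc).charpoly.roots = Finset.univ.val.map (fun p => dM p * dM p) :=
    roots_charpoly_of_unitary_diag _ _ _ hUM hM2dec'
  -- squares of the H- and G-spectra
  have hcHsq : ∀ j : Fin t, ((μ j : ℂ) * Complex.I) ^ 2 = -((μ j : ℂ) ^ 2) := by
    intro j; rw [mul_pow, Complex.I_sq]; ring
  have hcGsq : ∀ k : Fin r, ((ν k : ℂ) * Complex.I) ^ 2 = -((ν k : ℂ) ^ 2) := by
    intro k; rw [mul_pow, Complex.I_sq]; ring
  have SqH : A.charpoly.roots.map (fun z => z ^ 2)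
      = Multiset.replicate (m - 2 * t) (0:ℂ)
        + Finset.univ.val.bind (fun j => Multiset.replicate 2 (-((μ j : ℂ) ^ 2))) := by
    rw [hHspec, Multiset.map_add, Multiset.map_replicate, Multiset.map_bind]
    congr 1
    · norm_num
    · refine Multiset.bind_congr (fun j _ => ?_)
      rw [Multiset.insert_eq_cons, Multiset.map_cons, Multiset.map_singleton, neg_sq,
        hcHsq j]
      rfl
  have SqG : B.charpoly.roots.map (fun z => z ^ 2)
      = Multiset.replicate (n - 2 * r) (0:ℂ)
        + Finset.univ.val.bind (fun k => Multiset.replicate 2 (-((ν k : ℂ) ^ 2))) := by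
    rw [hGspec, Multiset.map_add, Multiset.map_replicate, Multiset.map_bind]
    congr 1
    · norm_num
    · refine Multiset.bind_congr (fun k _ => ?_)
      rw [Multiset.insert_eq_cons, Multiset.map_cons, Multiset.map_singleton, neg_sq,
        hcGsq k]
      rfl
  -- the square of the spectrum of Mc
  have KeyR : Mc.charpoly.roots.map (fun z => z ^ 2)
      = Multiset.replicate ((m - 2 * t) * (n - 2 * r)) (0:ℂ)
        + Finset.univ.val.bind (fun j => Finset.univ.val.bind (fun k =>
            Multiset.replicate 2 (-((μ j : ℂ) ^ 2) + -((ν k : ℂ) ^ 2))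
              + Multiset.replicate 2 (-((μ j : ℂ) ^ 2) + -((ν k : ℂ) ^ 2))))
        + Finset.univ.val.bind (fun j =>
            Multiset.replicate (n - 2 * r) (-((μ j : ℂ) ^ 2))
              + Multiset.replicate (n - 2 * r) (-((μ j : ℂ) ^ 2)))
        + Finset.univ.val.bind (fun k =>
            Multiset.replicate (m - 2 * t) (-((ν k : ℂ) ^ 2))
              + Multiset.replicate (m - 2 * t) (-((ν k : ℂ) ^ 2))) := by
    have step1 : Mc.charpoly.roots.map (fun z => z ^ 2)
        = Finset.univ.val.bind (fun i =>
            Finset.univ.val.map (fun j => dA i * dA i + dB j * dB j)) := by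
      rw [rootsM, Multiset.map_map]
      have : Finset.univ.val.map ((fun z => z ^ 2) ∘ dM)
          = Finset.univ.val.map (fun p => dM p * dM p) :=
        Multiset.map_congr rfl (fun p _ => by simp [Function.comp, pow_two])
      rw [this, ← w2, w1, univ_prod_map]
    have step2 : (A.charpoly.roots.map (fun z => z ^ 2)).bind
        (fun x => (B.charpoly.roots.map (fun z => z ^ 2)).map (fun y => x + y))
        = Finset.univ.val.bind (fun i =>
            Finset.univ.val.map (fun j => dA i * dA i + dB j * dB j)) := by
      rw [rootsA, rootsB, Multiset.map_map, Multiset.map_map, Multiset.bind_map]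
      refine Multiset.bind_congr (fun i _ => ?_)
      rw [Multiset.map_map]
      exact Multiset.map_congr rfl (fun j _ => by simp [Function.comp, pow_two])
    rw [step1, ← step2, SqH, SqG]
    exact grind_lemma (m - 2 * t) (n - 2 * r) (fun j => -((μ j : ℂ) ^ 2))
      (fun k => -((ν k : ℂ) ^ 2))
  -- negation-closure of the roots of Mc
  have hRneg : Mc.charpoly.roots.map (fun z => -z) = Mc.charpoly.roots := by
    have hch : Mc.charpoly
        = ((SH ⊗ₖ (1 : Matrix (Fin n) (Fin n) ℝ) + D ⊗ₖ SG).charpoly).map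
            (Complex.ofRealHom : ℝ →+* ℂ) := by
      rw [← hMcmap]
      exact Matrix.charpoly_map _ Complex.ofRealHom
    have hsplit : (Mc.charpoly).Splits := IsAlgClosed.splits _
    have hmapc : (Mc.charpoly).map (starRingEnd ℂ) = Mc.charpoly := by
      rw [hch, Polynomial.map_map]
      congr 1
      exact RingHom.ext fun x => by simp [Complex.conj_ofReal]
    have him : ∀ z ∈ Mc.charpoly.roots, (starRingEnd ℂ) z = -z := by
      intro z hz
      rw [rootsM] at hz
      obtain ⟨p, _, rfl⟩ := Multiset.mem_map.mp hz
      obtain ⟨x, hx⟩ := hdMim p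
      rw [hx]
      simp [_root_.map_mul, Complex.conj_I, Complex.conj_ofReal]
    calc Mc.charpoly.roots.map (fun z => -z)
        = Mc.charpoly.roots.map (starRingEnd ℂ) :=
          Multiset.map_congr rfl (fun z hz => (him z hz).symm)
      _ = ((Mc.charpoly).map (starRingEnd ℂ)).roots :=
          (hsplit.roots_map (starRingEnd ℂ)).symm
      _ = Mc.charpoly.roots := by rw [hmapc]
  -- the target multiset
  set T : Multiset ℂ :=
    Multiset.replicate ((m - 2 * t) * (n - 2 * r)) 0 +
      (Finset.univ : Finset (Fin t × Fin r)).val.bind (fun p =>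
        Multiset.replicate 2
            ((Real.sqrt ((μ p.1) ^ 2 + (ν p.2) ^ 2) : ℂ) * Complex.I) +
          Multiset.replicate 2
            (-((Real.sqrt ((μ p.1) ^ 2 + (ν p.2) ^ 2) : ℂ) * Complex.I))) +
      (Finset.univ : Finset (Fin t)).val.bind (fun j =>
        Multiset.replicate (n - 2 * r) ((μ j : ℂ) * Complex.I) +
          Multiset.replicate (n - 2 * r) (-((μ j : ℂ) * Complex.I))) +
      (Finset.univ : Finset (Fin r)).val.bind (fun k =>
        Multiset.replicate (m - 2 * t) ((ν k : ℂ) * Complex.I) +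
          Multiset.replicate (m - 2 * t) (-((ν k : ℂ) * Complex.I))) with hTdef
  have hTneg : T.map (fun z => -z) = T := by
    rw [hTdef]
    exact target_neg_struct (m - 2 * t) (n - 2 * r) ((m - 2 * t) * (n - 2 * r))
      (fun p => (Real.sqrt ((μ p.1) ^ 2 + (ν p.2) ^ 2) : ℂ) * Complex.I)
      (fun j => (μ j : ℂ) * Complex.I) (fun k => (ν k : ℂ) * Complex.I)
  have hTsq : T.map (fun z => z ^ 2)
      = Multiset.replicate ((m - 2 * t) * (n - 2 * r)) (0:ℂ)
        + Finset.univ.val.bind (fun j => Finset.univ.val.bind (fun k =>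
            Multiset.replicate 2 (-((μ j : ℂ) ^ 2) + -((ν k : ℂ) ^ 2))
              + Multiset.replicate 2 (-((μ j : ℂ) ^ 2) + -((ν k : ℂ) ^ 2))))
        + Finset.univ.val.bind (fun j =>
            Multiset.replicate (n - 2 * r) (-((μ j : ℂ) ^ 2))
              + Multiset.replicate (n - 2 * r) (-((μ j : ℂ) ^ 2)))
        + Finset.univ.val.bind (fun k =>
            Multiset.replicate (m - 2 * t) (-((ν k : ℂ) ^ 2))
              + Multiset.replicate (m - 2 * t) (-((ν k : ℂ) ^ 2))) := by
    rw [hTdef]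
    refine target_sq_struct (m - 2 * t) (n - 2 * r)
      (fun p => (Real.sqrt ((μ p.1) ^ 2 + (ν p.2) ^ 2) : ℂ) * Complex.I)
      (fun j => (μ j : ℂ) * Complex.I) (fun k => (ν k : ℂ) * Complex.I)
      (fun j k => -((μ j : ℂ) ^ 2) + -((ν k : ℂ) ^ 2))
      (fun j => -((μ j : ℂ) ^ 2)) (fun k => -((ν k : ℂ) ^ 2)) ?_ hcHsq hcGsq
    intro p
    rw [mul_pow, Complex.I_sq, ← Complex.ofReal_pow,
      Real.sq_sqrt (by positivity : (0:ℝ) ≤ (μ p.1) ^ 2 + (ν p.2) ^ 2)]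
    push_cast
    ring
  exact sq_neg_unique_aux (Multiset.card (Mc.charpoly.roots)) Mc.charpoly.roots T le_rfl
    hRneg hTneg (KeyR.trans hTsq.symm)
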